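/- arXiv:1504.01305 — 3 statements merged into one kernel-verified Lean document; each statement's English description precedes it below -/
import Mathlib

section
/- Let a = re^{iθ} ∈ 𝔻 with r = |a|, and set ℓ = 2π(1 − |a|)/(2π|a| + 1). There is an absolute constant C > 0 (independent of a) such that for every z = ρe^{iφ} with 1 < ρ < 1 + ℓ and |φ − θ| ≤ ℓ/2, one has ℓ/(2π) ≤ |1 − conj(a)·z| ≤ C·ℓ; consequently |1 − conj(a)·z|, 1 − |a|, and ℓ are pairwise comparable with absolute constants for all such z. -/
open Complex Set
open scoped Real

noncomputable section

lemma chord_le (ψ : ℝ) : ‖1 - Complex.exp ((ψ : ℂ) * Complex.I)‖ ≤ |ψ| := by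
  have hre : (1 - Complex.exp ((ψ : ℂ) * Complex.I)).re = 1 - Real.cos ψ := by
    simp [Complex.exp_ofReal_mul_I_re]
  have him : (1 - Complex.exp ((ψ : ℂ) * Complex.I)).im = -Real.sin ψ := by
    simp [Complex.exp_ofReal_mul_I_im]
  have hsq : ‖1 - Complex.exp ((ψ : ℂ) * Complex.I)‖ ^ 2 = 2 - 2 * Real.cos ψ := by
    rw [Complex.sq_norm, Complex.normSq_apply, hre, him]
    nlinarith [Real.sin_sq_add_cos_sq ψ]
  have h2 : ‖1 - Complex.exp ((ψ : ℂ) * Complex.I)‖ ^ 2 ≤ |ψ| ^ 2 := by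
    rw [hsq, _root_.sq_abs]
    nlinarith [Real.one_sub_sq_div_two_le_cos (x := ψ)]
  calc ‖1 - Complex.exp ((ψ : ℂ) * Complex.I)‖
      = Real.sqrt (‖1 - Complex.exp ((ψ : ℂ) * Complex.I)‖ ^ 2) :=
        (Real.sqrt_sq (norm_nonneg _)).symm
    _ ≤ Real.sqrt (|ψ| ^ 2) := Real.sqrt_le_sqrt h2
    _ = |ψ| := Real.sqrt_sq (abs_nonneg _)

set_option maxHeartbeats 1000000 in
/-- The two-sided estimate `|1 - conj(a)·z| ≈ 1 - |a| ≈ ℓ(I)` for `z` in the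
exterior Carleson box over the arc `I` of length `ℓ = 2π(1-|a|)/(2π|a|+1)`
centred at `e^{iθ}`, with absolute constants. -/
theorem exterior_box_comparability :
    ∃ C : ℝ, 0 < C ∧ ∀ r θ : ℝ, 0 ≤ r → r < 1 →
      ∀ ρ φ : ℝ,
        1 < ρ → ρ < 1 + 2 * π * (1 - r) / (2 * π * r + 1) →
        |φ - θ| ≤ (2 * π * (1 - r) / (2 * π * r + 1)) / 2 →
        (2 * π * (1 - r) / (2 * π * r + 1)) / (2 * π) ≤
            ‖1 - (starRingEnd ℂ) ((r : ℂ) * Complex.exp ((θ : ℂ) * Complex.I)) *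
              ((ρ : ℂ) * Complex.exp ((φ : ℂ) * Complex.I))‖ ∧
        ‖1 - (starRingEnd ℂ) ((r : ℂ) * Complex.exp ((θ : ℂ) * Complex.I)) *
              ((ρ : ℂ) * Complex.exp ((φ : ℂ) * Complex.I))‖ ≤
            C * (2 * π * (1 - r) / (2 * π * r + 1)) ∧
        ‖1 - (starRingEnd ℂ) ((r : ℂ) * Complex.exp ((θ : ℂ) * Complex.I)) *
              ((ρ : ℂ) * Complex.exp ((φ : ℂ) * Complex.I))‖ ≤ C * (1 - r) ∧
        1 - r ≤ C * ‖1 - (starRingEnd ℂ) ((r : ℂ) * Complex.exp ((θ : ℂ) * Complex.I)) *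
              ((ρ : ℂ) * Complex.exp ((φ : ℂ) * Complex.I))‖ ∧
        2 * π * (1 - r) / (2 * π * r + 1) ≤ C * (1 - r) ∧
        1 - r ≤ C * (2 * π * (1 - r) / (2 * π * r + 1)) := by
  refine ⟨100, by norm_num, ?_⟩
  intro r θ hr0 hr1 ρ φ hρ1 hρ2 hφ
  have hπ3 : (3:ℝ) < π := Real.pi_gt_three
  have hπ4 : π < 3.15 := Real.pi_lt_d2
  have hπ : (0:ℝ) < π := by linarith
  set L : ℝ := 2 * π * (1 - r) / (2 * π * r + 1) with hLdef
  have hden : (0:ℝ) < 2 * π * r + 1 := by nlinarith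
  have hL0 : 0 < L := div_pos (by nlinarith) hden
  have hLkey : L * (2 * π * r + 1) = 2 * π * (1 - r) := by
    rw [hLdef, div_mul_cancel₀ _ hden.ne']
  have hLle : L ≤ 2 * π * (1 - r) := by
    nlinarith [mul_nonneg (mul_nonneg hL0.le (by linarith : (0:ℝ) ≤ 2 * π)) hr0]
  have hL8 : L < 8 := by nlinarith [hLle]
  have h1mr : 2 * (1 - r) ≤ 3 * L := by
    nlinarith [mul_nonneg hL0.le (by linarith : (0:ℝ) ≤ 1 - r),
      mul_nonneg (mul_nonneg (by linarith : (0:ℝ) ≤ 2 * π) hL0.le)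
        (by linarith : (0:ℝ) ≤ 1 - r)]
  set ψ : ℝ := φ - θ with hψdef
  have key : (starRingEnd ℂ) ((r : ℂ) * Complex.exp ((θ : ℂ) * Complex.I)) *
      ((ρ : ℂ) * Complex.exp ((φ : ℂ) * Complex.I))
      = ((r * ρ : ℝ) : ℂ) * Complex.exp ((ψ : ℂ) * Complex.I) := by
    rw [map_mul, ← Complex.exp_conj, Complex.conj_ofReal]
    rw [show (starRingEnd ℂ) ((θ : ℂ) * Complex.I) = -((θ : ℂ) * Complex.I) by
      simp [Complex.conj_ofReal]]
    rw [hψdef, Complex.ofReal_mul, Complex.ofReal_sub]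
    rw [mul_mul_mul_comm, ← Complex.exp_add]
    ring_nf
  rw [key]
  set t : ℝ := r * ρ with htdef
  set z : ℂ := 1 - ((t : ℝ) : ℂ) * Complex.exp ((ψ : ℂ) * Complex.I) with hz
  clear_value L ψ t z
  have ht0 : 0 ≤ t := htdef ▸ mul_nonneg hr0 (by linarith)
  have htle : t ≤ r * (1 + L) := htdef ▸ mul_le_mul_of_nonneg_left hρ2.le hr0
  have htub : t < 1 + L := by rw [htdef]; nlinarith
  have hrt : r ≤ t := by rw [htdef]; nlinarith
  have hdiv : L / (2 * π) = 1 - r - r * L := by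
    field_simp
    linarith [hLkey]
  -- lower bound on the norm via the real part
  have hre : z.re = 1 - t * Real.cos ψ := by
    simp [hz, Complex.exp_ofReal_mul_I_re]
  have hlow : 1 - t ≤ ‖z‖ := by
    have h1 : z.re ≤ ‖z‖ := by
      exact (le_abs_self z.re).trans (Complex.abs_re_le_norm z)
    have h2 : 1 - t ≤ z.re := by
      rw [hre]; nlinarith [Real.cos_le_one ψ]
    linarith
  have hlow2 : L / (2 * π) ≤ ‖z‖ := by
    rw [hdiv]; nlinarith
  -- upper bound
  have hup : ‖z‖ ≤ |1 - t| + t * |ψ| := by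
    have hzeq : z = ((1 - t : ℝ) : ℂ)
        + ((t : ℝ) : ℂ) * (1 - Complex.exp ((ψ : ℂ) * Complex.I)) := by
      rw [hz]; push_cast; ring
    rw [hzeq]
    refine (norm_add_le _ _).trans ?_
    gcongr
    · rw [Complex.norm_real, Real.norm_eq_abs]
    · rw [norm_mul, Complex.norm_real, Real.norm_eq_abs, _root_.abs_of_nonneg ht0]
      exact mul_le_mul_of_nonneg_left (chord_le ψ) ht0
  have habs : |1 - t| ≤ (1 - r) + L := by
    rw [abs_le]; constructor <;> [linarith [hL0, htub]; linarith [hrt, hL0]]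
  have hψ0 : 0 ≤ |ψ| := abs_nonneg ψ
  have htψ : t * |ψ| ≤ (1 + L) * (L / 2) :=
    mul_le_mul htub.le hφ hψ0 (by linarith)
  have hup2 : ‖z‖ ≤ 7 * L := by
    nlinarith [hup, habs, htψ, mul_nonneg hL0.le (by linarith : (0:ℝ) ≤ 8 - L)]
  have hLnorm : L ≤ 2 * π * ‖z‖ := by
    rw [div_le_iff₀ (by positivity)] at hlow2
    linarith [hlow2]
  refine ⟨hlow2, ?_, ?_, ?_, ?_, ?_⟩
  · linarith [hup2, hL0]
  · nlinarith [hup2, hLle,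
      mul_le_mul_of_nonneg_right (show 14 * π ≤ 100 by linarith)
        (show (0:ℝ) ≤ 1 - r by linarith)]
  · nlinarith [h1mr, hLnorm, norm_nonneg z,
      mul_le_mul_of_nonneg_right hπ4.le (norm_nonneg z)]
  · nlinarith [hLle,
      mul_le_mul_of_nonneg_right (show 2 * π ≤ 100 by linarith)
        (show (0:ℝ) ≤ 1 - r by linarith)]
  · linarith [h1mr, hL0]

end
end

section
/- Let 0 < h ≤ 2π, θ ∈ ℝ, and set a = ((2π − h)/(2π(h + 1)))·e^{iθ} ∈ 𝔻. Then for every z = ρe^{iφ} with 1 < ρ < 1 + h and |φ − θ| ≤ h/2, one has 0 < |σ_a(z)|² − 1 ≤ 8π(2π + 1)(π + 1). -/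
open Complex Set
open scoped Real

noncomputable section

/-- The Möbius transformation `σ_a(z) = (a - z)/(1 - conj a · z)`. -/
def mobius (a z : ℂ) : ℂ := (a - z) / (1 - (starRingEnd ℂ) a * z)

set_option maxHeartbeats 1000000 in
/-- For `a = ((2π − h)/(2π(h + 1)))·e^{iθ}` and `z` in the exterior Carleson box
over the arc of length `h` centred at `e^{iθ}`, one has
`0 < |σ_a(z)|² − 1 ≤ 8π(2π + 1)(π + 1)`. -/
theorem mobius_exterior_box_bound
    (h θ : ℝ) (hh0 : 0 < h) (hh : h ≤ 2 * π)
    (ρ φ : ℝ) (hρ1 : 1 < ρ) (hρ2 : ρ < 1 + h) (hφ : |φ - θ| ≤ h / 2) :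
    0 < ‖mobius ((((2 * π - h) / (2 * π * (h + 1)) : ℝ) : ℂ) *
          Complex.exp ((θ : ℂ) * Complex.I))
        ((ρ : ℂ) * Complex.exp ((φ : ℂ) * Complex.I))‖ ^ 2 - 1 ∧
    ‖mobius ((((2 * π - h) / (2 * π * (h + 1)) : ℝ) : ℂ) *
          Complex.exp ((θ : ℂ) * Complex.I))
        ((ρ : ℂ) * Complex.exp ((φ : ℂ) * Complex.I))‖ ^ 2 - 1 ≤
      8 * π * (2 * π + 1) * (π + 1) := by
  have hπ : (0:ℝ) < π := Real.pi_pos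
  set r : ℝ := (2 * π - h) / (2 * π * (h + 1)) with hrdef
  set a : ℂ := (r : ℂ) * Complex.exp ((θ:ℂ) * Complex.I) with hadef
  set z : ℂ := (ρ : ℂ) * Complex.exp ((φ:ℂ) * Complex.I) with hzdef
  set C : ℝ := Real.cos θ * Real.cos φ + Real.sin θ * Real.sin φ with hCdef
  clear_value a z C
  have hC1 : C ≤ 1 := by
    have := Real.cos_le_one (θ - φ)
    rw [Real.cos_sub] at this
    linarith
  have hr0 : 0 ≤ r := div_nonneg (by linarith) (by positivity)
  have hr1 : r * (h + 1) = 1 - h / (2*π) := by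
    rw [hrdef]; field_simp
  clear_value r
  have hrle : r ≤ 1 - h/(2*π) := by nlinarith
  have hρ0 : (0:ℝ) < ρ := by linarith
  have hsθ := Real.sin_sq_add_cos_sq θ
  have hsφ := Real.sin_sq_add_cos_sq φ
  have hN : ‖a - z‖^2 = r^2 - 2*r*ρ*C + ρ^2 := by
    rw [Complex.sq_norm, Complex.normSq_apply]
    simp only [hadef, hzdef, Complex.sub_re, Complex.sub_im, Complex.mul_re, Complex.mul_im,
      Complex.ofReal_re, Complex.ofReal_im, Complex.exp_ofReal_mul_I_re,
      Complex.exp_ofReal_mul_I_im, hCdef]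
    linear_combination r^2*hsθ + ρ^2*hsφ
  have hD : ‖1 - (starRingEnd ℂ) a * z‖^2 = 1 - 2*r*ρ*C + (r*ρ)^2 := by
    rw [Complex.sq_norm, Complex.normSq_apply]
    simp only [hadef, hzdef, map_mul, Complex.conj_ofReal, Complex.sub_re, Complex.sub_im,
      Complex.one_re, Complex.one_im, Complex.mul_re, Complex.mul_im,
      Complex.ofReal_re, Complex.ofReal_im, Complex.conj_re, Complex.conj_im,
      Complex.exp_ofReal_mul_I_re, Complex.exp_ofReal_mul_I_im, hCdef]
    linear_combination (Real.sin φ^2 + Real.cos φ^2)*r^2*ρ^2*hsθ + r^2*ρ^2*hsφ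
  have hrρ : r * ρ ≤ 1 - h/(2*π) := by nlinarith
  have hh2π : h/(2*π) ≤ 1 := by
    rw [div_le_one (by positivity)]; linarith
  have hp : 0 < h/(2*π) := by positivity
  have hrlt1 : r < 1 := by linarith
  have hDge : (h/(2*π))^2 ≤ ‖1 - (starRingEnd ℂ) a * z‖^2 := by
    rw [hD]
    have h1 : h/(2*π) ≤ 1 - r*ρ := by linarith
    have h2 : (h/(2*π))^2 ≤ (1 - r*ρ)^2 := pow_le_pow_left₀ hp.le h1 2
    nlinarith [mul_nonneg (mul_nonneg hr0 hρ0.le) (by linarith : (0:ℝ) ≤ 1 - C)]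
  have hDpos : 0 < ‖1 - (starRingEnd ℂ) a * z‖^2 := lt_of_lt_of_le (by positivity) hDge
  have hmob : ‖mobius a z‖^2 = ‖a - z‖^2 / ‖1 - (starRingEnd ℂ) a * z‖^2 := by
    rw [mobius, norm_div, div_pow]
  have hsub : ‖a - z‖^2 - ‖1 - (starRingEnd ℂ) a * z‖^2 = (1 - r^2) * (ρ^2 - 1) := by
    rw [hN, hD]; ring
  have hNDpos : 0 < (1 - r^2) * (ρ^2 - 1) := by
    have h1 : r^2 < 1 := by
      have := pow_lt_one₀ hr0 hrlt1 (two_ne_zero)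
      simpa using this
    have h2 : 1 < ρ^2 := by
      have := one_lt_pow₀ hρ1 (two_ne_zero)
      simpa using this
    apply mul_pos <;> linarith
  have key : ‖mobius a z‖^2 - 1 =
      (1 - r^2) * (ρ^2 - 1) / ‖1 - (starRingEnd ℂ) a * z‖^2 := by
    rw [hmob, ← hsub, sub_div, div_self hDpos.ne']
  constructor
  · rw [key]; positivity
  · rw [key, div_le_iff₀ hDpos]
    have h1r : (1 - r) * (h + 1) = h * (2*π+1) / (2*π) := by
      have : (1 - r) * (h + 1) = (h+1) - r*(h+1) := by ring
      rw [this, hr1]; field_simp; ring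
    have h1rle : 1 - r ≤ h * (2*π+1) / (2*π) := by nlinarith
    have hb1 : 1 - r^2 ≤ 2 * (h * (2*π+1) / (2*π)) := by nlinarith
    have hb2 : ρ^2 - 1 ≤ 2 * h * (1 + π) := by nlinarith
    have hprod : (1 - r^2) * (ρ^2 - 1) ≤
        (2 * (h * (2*π+1) / (2*π))) * (2 * h * (1 + π)) := by
      apply mul_le_mul hb1 hb2 (by nlinarith) (by positivity)
    have hfin : (2 * (h * (2*π+1) / (2*π))) * (2 * h * (1 + π)) =
        8 * π * (2 * π + 1) * (π + 1) * (h/(2*π))^2 := by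
      field_simp; ring
    calc (1 - r^2) * (ρ^2 - 1) ≤ 8 * π * (2 * π + 1) * (π + 1) * (h/(2*π))^2 := by
          rw [← hfin]; exact hprod
      _ ≤ 8 * π * (2 * π + 1) * (π + 1) * ‖1 - (starRingEnd ℂ) a * z‖^2 := by
          apply mul_le_mul_of_nonneg_left hDge (by positivity)

end
end

section
/- Let F be analytic on the unit disk 𝔻 and let n ≥ 1 be an integer. Define F̃_n on {z ∈ ℂ : |z| > 1} by F̃_n(z) = Σ_{i=0}^{n} ((−1)^i / i!) (z* − z)^i F^{(i)}(z*), where z* = 1/conj(z). Then F̃_n is of class C¹ on {|z| > 1} (as a function of the two real variables), and for all |z| > 1 its Cauchy–Riemann derivative is ∂̄F̃_n(z) = ((−1)^{n+1} / n!) (z* − z)^n (z*)² F^{(n+1)}(z*). -/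
open MeasureTheory Metric Complex Set
open scoped Real

noncomputable section

/-- The Cauchy–Riemann (Wirtinger) operator `∂̄g = (1/2)(∂g/∂x + i ∂g/∂y)`. -/
def dbar (g : ℂ → ℂ) (z : ℂ) : ℂ :=
  (1 / 2 : ℂ) * (fderiv ℝ g z 1 + Complex.I * fderiv ℝ g z Complex.I)

/-- `z* = 1/conj(z)`. -/
def zstar (z : ℂ) : ℂ := ((starRingEnd ℂ) z)⁻¹

/-- The ℝ-linear map `v ↦ A v + B conj v`. -/
def mapAB (A B : ℂ) : ℂ →L[ℝ] ℂ :=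
  A • ContinuousLinearMap.id ℝ ℂ + B • Complex.conjCLE.toContinuousLinearMap

lemma mapAB_apply (A B v : ℂ) : mapAB A B v = A * v + B * (starRingEnd ℂ) v := by
  simp [mapAB]

lemma dbar_eq_of_hasFDerivAt {f : ℂ → ℂ} {A B z : ℂ} (h : HasFDerivAt f (mapAB A B) z) :
    dbar f z = B := by
  rw [dbar, h.fderiv]
  simp only [mapAB_apply, map_one, Complex.conj_I, mul_one]
  linear_combination (A / 2 - B / 2) * Complex.I_sq

lemma hasFDerivAt_zstar {z : ℂ} (hz : z ≠ 0) :
    HasFDerivAt zstar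
      ((-(zstar z) ^ 2) • Complex.conjCLE.toContinuousLinearMap) z := by
  have hcz : (starRingEnd ℂ) z ≠ 0 := by simpa using hz
  have hconj : HasFDerivAt (fun w : ℂ => (starRingEnd ℂ) w)
      Complex.conjCLE.toContinuousLinearMap z := Complex.conjCLE.hasFDerivAt
  have h := (hasDerivAt_inv hcz).comp_hasFDerivAt z hconj
  refine h.congr_fderiv ?_
  ext v
  simp only [ContinuousLinearMap.smul_apply, smul_eq_mul]
  rw [zstar]
  ring

lemma key (i : ℕ) (c : ℂ) {g : ℂ → ℂ} {gd : ℂ} {z : ℂ} (hz : z ≠ 0)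
    (hg : HasDerivAt g gd (zstar z)) :
    HasFDerivAt (fun z => c * (zstar z - z) ^ i * g (zstar z))
      (mapAB (-(c * i * (zstar z - z) ^ (i - 1) * g (zstar z)))
        (c * (-(zstar z) ^ 2) *
          ((i : ℂ) * (zstar z - z) ^ (i - 1) * g (zstar z) + (zstar z - z) ^ i * gd))) z := by
  have hq := hasFDerivAt_zstar hz
  have hp : HasFDerivAt (fun z : ℂ => zstar z - z)
      ((-(zstar z) ^ 2) • Complex.conjCLE.toContinuousLinearMap - ContinuousLinearMap.id ℝ ℂ) z :=
    hq.sub (hasFDerivAt_id z)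
  have hpow := HasDerivAt.comp_hasFDerivAt (f := fun z : ℂ => zstar z - z) z (hasDerivAt_pow i (zstar z - z)) hp
  have hgq := hg.comp_hasFDerivAt z hq
  have h := (hpow.const_mul c).mul hgq
  refine h.congr_fderiv ?_
  ext v
  simp only [mapAB_apply, ContinuousLinearMap.add_apply, ContinuousLinearMap.smul_apply,
    ContinuousLinearMap.sub_apply, ContinuousLinearMap.id_apply, ContinuousLinearEquiv.coe_coe,
    Complex.conjCLE_apply, smul_eq_mul, Function.comp_apply, Function.comp]
  ring


noncomputable section

lemma telescope (n : ℕ) (w z : ℂ) (G : ℕ → ℂ) :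
    ∑ i ∈ Finset.range (n + 1),
      ((-1 : ℂ) ^ i / (Nat.factorial i : ℂ)) * (-(w) ^ 2) *
        ((i : ℂ) * (w - z) ^ (i - 1) * G i + (w - z) ^ i * G (i + 1))
      = ((-1 : ℂ) ^ (n + 1) / (Nat.factorial n : ℂ)) * (w - z) ^ n * w ^ 2 * G (n + 1) := by
  induction n with
  | zero => simp
  | succ n ih =>
    rw [Finset.sum_range_succ, ih]
    have hfac : ((n + 1).factorial : ℂ) = ((n : ℂ) + 1) * (n.factorial : ℂ) := by
      push_cast [Nat.factorial_succ]; ring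
    have h1 : ((n : ℂ) + 1) ≠ 0 := Nat.cast_add_one_ne_zero n
    have h2 : ((n.factorial : ℂ)) ≠ 0 := Nat.cast_ne_zero.mpr (Nat.factorial_ne_zero n)
    simp only [Nat.add_sub_cancel]
    push_cast
    field_simp [hfac]
    rw [hfac]
    ring



/-- The explicit pseudoanalytic extension
`F̃_n(z) = Σ_{i=0}^{n} ((−1)^i/i!) (z* − z)^i F^{(i)}(z*)` is `C¹` on `{|z| > 1}`
and its `∂̄`-derivative equals `((−1)^{n+1}/n!) (z* − z)^n (z*)² F^{(n+1)}(z*)`. -/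
theorem dbar_of_extension
    (F : ℂ → ℂ) (hF : DifferentiableOn ℂ F (ball (0 : ℂ) 1))
    (n : ℕ) (hn : 1 ≤ n)
    (Ftil : ℂ → ℂ)
    (hFtil : ∀ z : ℂ, Ftil z =
      ∑ i ∈ Finset.range (n + 1),
        ((-1 : ℂ) ^ i / (Nat.factorial i : ℂ)) * (zstar z - z) ^ i *
          iteratedDeriv i F (zstar z)) :
    ContDiffOn ℝ 1 Ftil {z : ℂ | 1 < ‖z‖} ∧
    ∀ z : ℂ, 1 < ‖z‖ →
      dbar Ftil z = ((-1 : ℂ) ^ (n + 1) / (Nat.factorial n : ℂ)) *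
        (zstar z - z) ^ n * (zstar z) ^ 2 * iteratedDeriv (n + 1) F (zstar z) := by
  have hA : ∀ i : ℕ, AnalyticOnNhd ℂ (iteratedDeriv i F) (ball (0 : ℂ) 1) := by
    intro i
    induction i with
    | zero => simpa [iteratedDeriv_zero] using hF.analyticOnNhd isOpen_ball
    | succ i ih => rw [iteratedDeriv_succ]; exact ih.deriv
  have hz0 : ∀ z : ℂ, 1 < ‖z‖ → z ≠ 0 := by
    intro z hz h; rw [h] at hz; norm_num at hz
  have hmem : ∀ z : ℂ, 1 < ‖z‖ → zstar z ∈ ball (0 : ℂ) 1 := by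
    intro z hz
    simp only [mem_ball_zero_iff, zstar, norm_inv, RCLike.norm_conj]
    exact inv_lt_one_of_one_lt₀ hz
  have hder : ∀ (i : ℕ) (z : ℂ), 1 < ‖z‖ →
      HasDerivAt (iteratedDeriv i F) (iteratedDeriv (i + 1) F (zstar z)) (zstar z) := by
    intro i z hz
    have h := ((hA i) (zstar z) (hmem z hz)).differentiableAt.hasDerivAt
    rwa [iteratedDeriv_succ]
  have hFeq : Ftil = fun z => ∑ i ∈ Finset.range (n + 1),
      ((-1 : ℂ) ^ i / (Nat.factorial i : ℂ)) * (zstar z - z) ^ i *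
        iteratedDeriv i F (zstar z) := funext hFtil
  constructor
  · intro z hz
    have hz' : z ≠ 0 := hz0 z hz
    have hcz : (starRingEnd ℂ) z ≠ 0 := by simpa using hz'
    have hconj : ContDiffAt ℝ 1 (fun w : ℂ => (starRingEnd ℂ) w) z :=
      Complex.conjCLE.toContinuousLinearMap.contDiff.contDiffAt
    have hzs : ContDiffAt ℝ 1 zstar z := hconj.inv hcz
    rw [hFeq]
    apply ContDiffAt.contDiffWithinAt
    apply ContDiffAt.sum
    intro i _
    have hG : ContDiffAt ℝ 1 (iteratedDeriv i F) (zstar z) :=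
      (((hA i) (zstar z) (hmem z hz)).contDiffAt).restrict_scalars ℝ
    exact (contDiffAt_const.mul ((hzs.sub contDiffAt_id).pow i)).mul (hG.comp z hzs)
  · intro z hz
    have hsum : HasFDerivAt Ftil
        (∑ i ∈ Finset.range (n + 1),
          mapAB (-(((-1 : ℂ) ^ i / (Nat.factorial i : ℂ)) * i * (zstar z - z) ^ (i - 1) *
              iteratedDeriv i F (zstar z)))
            (((-1 : ℂ) ^ i / (Nat.factorial i : ℂ)) * (-(zstar z) ^ 2) *
              ((i : ℂ) * (zstar z - z) ^ (i - 1) * iteratedDeriv i F (zstar z) +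
                (zstar z - z) ^ i * iteratedDeriv (i + 1) F (zstar z)))) z := by
      rw [hFeq]
      exact HasFDerivAt.fun_sum fun i _ =>
        key i ((-1 : ℂ) ^ i / (Nat.factorial i : ℂ)) (hz0 z hz) (hder i z hz)
    have hmap : (∑ i ∈ Finset.range (n + 1),
          mapAB (-(((-1 : ℂ) ^ i / (Nat.factorial i : ℂ)) * i * (zstar z - z) ^ (i - 1) *
              iteratedDeriv i F (zstar z)))
            (((-1 : ℂ) ^ i / (Nat.factorial i : ℂ)) * (-(zstar z) ^ 2) *
              ((i : ℂ) * (zstar z - z) ^ (i - 1) * iteratedDeriv i F (zstar z) +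
                (zstar z - z) ^ i * iteratedDeriv (i + 1) F (zstar z))))
        = mapAB
            (∑ i ∈ Finset.range (n + 1),
              -(((-1 : ℂ) ^ i / (Nat.factorial i : ℂ)) * i * (zstar z - z) ^ (i - 1) *
                iteratedDeriv i F (zstar z)))
            (∑ i ∈ Finset.range (n + 1),
              ((-1 : ℂ) ^ i / (Nat.factorial i : ℂ)) * (-(zstar z) ^ 2) *
                ((i : ℂ) * (zstar z - z) ^ (i - 1) * iteratedDeriv i F (zstar z) +
                  (zstar z - z) ^ i * iteratedDeriv (i + 1) F (zstar z))) := by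
      ext v
      simp [mapAB_apply, Finset.sum_mul, Finset.sum_add_distrib]
    rw [hmap] at hsum
    rw [dbar_eq_of_hasFDerivAt hsum]
    simpa using telescope n (zstar z) z (fun i => iteratedDeriv i F (zstar z))

end
end
end
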